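/- Let f be C² on [a,b]×[c,d] with trapezoidal error E(f) as above, and suppose 1 < p < ∞ with q its conjugate exponent. Then |E(f)| ≤ (‖f_x(·,c)‖_p + ‖f_x(·,d)‖_p)·(d−c)(b−a)^{2−1/p}/4 · ((p−1)/(2p−1))^{1−1/p} + (‖f_y(a,·)‖_p + ‖f_y(b,·)‖_p)·(b−a)(d−c)^{2−1/p}/4 · ((p−1)/(2p−1))^{1−1/p} + ‖f_{xy}‖_p·(b−a)^{2−1/p}(d−c)^{2−1/p}/4 · ((p−1)/(2p−1))^{2(1−1/p)}. -/

import Mathlib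

set_option maxHeartbeats 1000000

open MeasureTheory Set intervalIntegral

lemma trap_id {a b : ℝ} (hab : a < b) {g g' : ℝ → ℝ}
    (hg : ContinuousOn g (Icc a b))
    (hg' : ∀ x ∈ Ioo a b, HasDerivAt g (g' x) x)
    (hint : IntervalIntegrable g' volume a b) :
    ∫ x in a..b, g x
      = (g a + g b) * ((b - a) / 2) - ∫ x in a..b, (x - (a + b) / 2) * g' x := by
  set m : ℝ := (a + b) / 2 with hm
  have huIcc : uIcc a b = Icc a b := uIcc_of_le hab.le
  have hgi : IntervalIntegrable g volume a b := by
    apply ContinuousOn.intervalIntegrable; rwa [huIcc]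
  have hki : IntervalIntegrable (fun x => (x - m) * g' x) volume a b :=
    hint.continuousOn_mul (by fun_prop)
  have key : ∫ x in a..b, (g x + (x - m) * g' x)
      = (b - m) * g b - (a - m) * g a := by
    have := integral_eq_sub_of_hasDeriv_right_of_le hab.le
      (f := fun x => (x - m) * g x) (f' := fun x => g x + (x - m) * g' x)
      (by fun_prop)
      (fun x hx => by
        have h1 : HasDerivAt (fun x : ℝ => x - m) 1 x := (hasDerivAt_id x).sub_const m
        have := h1.mul (hg' x hx)
        simp only [one_mul] at this
        exact this.hasDerivWithinAt)
      (hgi.add hki)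
    simpa using this
  rw [integral_add hgi hki] at key
  have e1 : b - m = (b - a) / 2 := by rw [hm]; ring
  have e2 : a - m = -((b - a) / 2) := by rw [hm]; ring
  rw [e1, e2] at key
  linear_combination key

lemma kernel_int {a b q : ℝ} (hab : a < b) (hq : 0 < q) :
    ∫ x in a..b, |x - (a + b) / 2| ^ q
      = 2 * ((b - a) / 2) ^ (q + 1) / (q + 1) := by
  set m : ℝ := (a + b) / 2 with hm
  have ham : a ≤ m := by rw [hm]; linarith
  have hmb : m ≤ b := by rw [hm]; linarith
  have hcont : Continuous fun x : ℝ => |x - m| ^ q :=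
    ((continuous_id.sub continuous_const).abs).rpow_const (fun x => Or.inr hq.le)
  have hsplit : (∫ x in a..m, |x - m| ^ q) + (∫ x in m..b, |x - m| ^ q)
      = ∫ x in a..b, |x - m| ^ q :=
    integral_add_adjacent_intervals (hcont.intervalIntegrable _ _)
      (hcont.intervalIntegrable _ _)
  have h1 : (∫ x in m..b, |x - m| ^ q) = (b - m) ^ (q + 1) / (q + 1) := by
    have : (∫ x in m..b, |x - m| ^ q) = ∫ x in m..b, (x - m) ^ q := by
      apply integral_congr
      intro x hx
      rw [uIcc_of_le hmb] at hx
      show |x - m| ^ q = (x - m) ^ q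
      rw [abs_of_nonneg (by linarith [hx.1])]
    rw [this, integral_comp_sub_right (fun x => x ^ q) m, sub_self,
      integral_rpow (Or.inl (by linarith)), Real.zero_rpow (by positivity)]
    ring
  have h2 : (∫ x in a..m, |x - m| ^ q) = (m - a) ^ (q + 1) / (q + 1) := by
    have : (∫ x in a..m, |x - m| ^ q) = ∫ x in a..m, (m - x) ^ q := by
      apply integral_congr
      intro x hx
      rw [uIcc_of_le ham] at hx
      show |x - m| ^ q = (m - x) ^ q
      rw [abs_of_nonpos (by linarith [hx.2]), neg_sub]
    rw [this, integral_comp_sub_left (fun x => x ^ q) m, sub_self,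
      integral_rpow (Or.inl (by linarith)), Real.zero_rpow (by positivity)]
    ring
  have e1 : b - m = (b - a) / 2 := by rw [hm]; ring
  have e2 : m - a = (b - a) / 2 := by rw [hm]; ring
  rw [← hsplit, h1, h2, e1, e2]
  ring

lemma const_eq {a b p q : ℝ} (hab : a < b) (hq : Real.HolderConjugate p q) :
    (2 * ((b - a) / 2) ^ (q + 1) / (q + 1)) ^ (1 / q)
      = (b - a) ^ (2 - 1 / p) / 2 * ((p - 1) / (2 * p - 1)) ^ (1 - 1 / p) := by
  have hp1 := hq.lt
  have hq1 := hq.symm.lt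
  have hqpos : (0:ℝ) < q := hq.symm.pos
  have hba : (0:ℝ) < b - a := sub_pos.2 hab
  have hh : (0:ℝ) < (b - a) / 2 := by positivity
  have hq1' : (0:ℝ) < q + 1 := by linarith
  have hqe : q = p / (p - 1) := hq.conjugate_eq
  have hp1' : p - 1 ≠ 0 := by intro h; rw [sub_eq_zero] at h; linarith [h]
  have h2p : (2:ℝ) * p - 1 ≠ 0 := by intro h; nlinarith [h]
  have hsum : q + 1 = (2 * p - 1) / (p - 1) := by
    rw [hqe]; field_simp; ring
  have hθq : (p - 1) / (2 * p - 1) = 1 / (q + 1) := by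
    rw [hsum, one_div_div]
  have hinvq : 1 / q = 1 - 1 / p := by
    have h := hq.inv_add_inv_eq_one
    rw [one_div, one_div]; linarith
  have hexp : (q + 1) * (1 / q) = 2 - 1 / p := by
    have hq0 : q ≠ 0 := ne_of_gt hqpos
    have : (q + 1) * (1 / q) = 1 + 1 / q := by field_simp
    rw [this, hinvq]; ring
  have step1 : 2 * ((b - a) / 2) ^ (q + 1) / (q + 1)
      = 2 * ((b - a) / 2) ^ (q + 1) * ((p - 1) / (2 * p - 1)) := by
    rw [hθq]; ring
  rw [step1]
  rw [Real.mul_rpow (by positivity) (le_of_lt (div_pos (by linarith) (by nlinarith)))]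
  rw [Real.mul_rpow (by norm_num) (le_of_lt (Real.rpow_pos_of_pos hh _))]
  rw [← Real.rpow_mul hh.le, hexp]
  rw [Real.div_rpow hba.le (by norm_num : (0:ℝ) ≤ 2)]
  rw [hinvq]
  have e : (2:ℝ) ^ (1 - 1 / p) / 2 ^ (2 - 1 / p) = 1 / 2 := by
    rw [← Real.rpow_sub (by norm_num : (0:ℝ) < 2),
      show (1 - 1 / p) - (2 - 1 / p) = (-1 : ℝ) by ring, Real.rpow_neg_one]
    norm_num
  have h2 : (2:ℝ) ^ (1 - 1 / p) * ((b - a) ^ (2 - 1 / p) / 2 ^ (2 - 1 / p))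
      = (b - a) ^ (2 - 1 / p) / 2 := by
    calc (2:ℝ) ^ (1 - 1 / p) * ((b - a) ^ (2 - 1 / p) / 2 ^ (2 - 1 / p))
        = (b - a) ^ (2 - 1 / p) * ((2:ℝ) ^ (1 - 1 / p) / 2 ^ (2 - 1 / p)) := by ring
      _ = (b - a) ^ (2 - 1 / p) / 2 := by rw [e]; ring
  rw [h2]

lemma kernel_holder {a b p q : ℝ} (hab : a < b) (hq : Real.HolderConjugate p q)
    (hki : ∫ x in a..b, |x - (a + b) / 2| ^ q = 2 * ((b - a) / 2) ^ (q + 1) / (q + 1))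
    (hce : (2 * ((b - a) / 2) ^ (q + 1) / (q + 1)) ^ (1 / q)
      = (b - a) ^ (2 - 1 / p) / 2 * ((p - 1) / (2 * p - 1)) ^ (1 - 1 / p))
    {φ : ℝ → ℝ} (hφ : ContinuousOn φ (Icc a b)) :
    |∫ x in a..b, (x - (a + b) / 2) * φ x|
      ≤ (b - a) ^ (2 - 1 / p) / 2 * ((p - 1) / (2 * p - 1)) ^ (1 - 1 / p)
        * (∫ x in a..b, |φ x| ^ p) ^ (1 / p) := by
  set m : ℝ := (a + b) / 2 with hm
  have ham : a ≤ m := by rw [hm]; linarith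
  have hmb : m ≤ b := by rw [hm]; linarith
  set μ : Measure ℝ := volume.restrict (Ioc a b) with hμ
  haveI : IsFiniteMeasure μ := by
    constructor
    rw [hμ, Measure.restrict_apply_univ, Real.volume_Ioc]
    exact ENNReal.ofReal_lt_top
  obtain ⟨C, hC⟩ := isCompact_Icc.exists_bound_of_continuousOn hφ
  have hker : MemLp (fun x : ℝ => x - m) (ENNReal.ofReal q) μ := by
    refine MemLp.of_bound ((continuous_id.sub continuous_const).aestronglyMeasurable) (b - a) ?_
    rw [hμ, ae_restrict_iff' measurableSet_Ioc]
    filter_upwards with x hx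
    rw [Real.norm_eq_abs, abs_le]
    exact ⟨by linarith [hx.1, hx.2], by linarith [hx.1, hx.2]⟩
  have hφm : MemLp φ (ENNReal.ofReal p) μ := by
    refine MemLp.of_bound ?_ C ?_
    · exact ((hφ.mono Ioc_subset_Icc_self).aestronglyMeasurable measurableSet_Ioc)
    · rw [hμ, ae_restrict_iff' measurableSet_Ioc]
      filter_upwards with x hx
      exact hC x ⟨hx.1.le, hx.2⟩
  have hold := integral_mul_norm_le_Lp_mul_Lq (μ := μ) hq.symm hker hφm
  have e0 : |∫ x in a..b, (x - m) * φ x| ≤ ∫ x in a..b, |(x - m) * φ x| :=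
    abs_integral_le_integral_abs hab.le
  have e1 : (∫ x in a..b, |(x - m) * φ x|) = ∫ x, ‖x - m‖ * ‖φ x‖ ∂μ := by
    rw [integral_of_le hab.le]
    simp only [Real.norm_eq_abs, abs_mul]
    rfl
  have e2 : (∫ x, ‖x - m‖ ^ q ∂μ) = 2 * ((b - a) / 2) ^ (q + 1) / (q + 1) := by
    rw [← hki, integral_of_le hab.le]
    simp only [Real.norm_eq_abs]
    rfl
  have e3 : (∫ x, ‖φ x‖ ^ p ∂μ) = ∫ x in a..b, |φ x| ^ p := by
    rw [integral_of_le hab.le]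
    simp only [Real.norm_eq_abs]
    rfl
  rw [e2, e3, hce] at hold
  calc |∫ x in a..b, (x - m) * φ x| ≤ ∫ x in a..b, |(x - m) * φ x| := e0
    _ = ∫ x, ‖x - m‖ * ‖φ x‖ ∂μ := e1
    _ ≤ _ := hold

lemma fub {a b c d : ℝ} (hab : a ≤ b) (hcd : c ≤ d) {f : ℝ → ℝ → ℝ}
    (hf : Continuous fun z : ℝ × ℝ => f z.1 z.2) :
    ∫ x in a..b, ∫ y in c..d, f x y = ∫ y in c..d, ∫ x in a..b, f x y := by
  rw [integral_of_le hab, integral_of_le hcd]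
  simp only [integral_of_le hab, integral_of_le hcd]
  apply MeasureTheory.integral_integral_swap
  rw [Function.uncurry_def]
  rw [Measure.prod_restrict]
  have : IntegrableOn (fun z : ℝ × ℝ => f z.1 z.2) (Ioc a b ×ˢ Ioc c d) (volume.prod volume) := by
    apply IntegrableOn.mono_set
      (hf.continuousOn.integrableOn_compact (isCompact_Icc.prod isCompact_Icc))
    exact prod_mono Ioc_subset_Icc_self Ioc_subset_Icc_self
  exact this

lemma ext_cont {s : Set (ℝ × ℝ)} (hs : IsClosed s) {f : ℝ → ℝ → ℝ}
    (hf : ContinuousOn (fun z : ℝ × ℝ => f z.1 z.2) s) :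
    ∃ g : ℝ → ℝ → ℝ, Continuous (fun z : ℝ × ℝ => g z.1 z.2)
      ∧ ∀ x y, (x, y) ∈ s → g x y = f x y := by
  obtain ⟨g, hg⟩ := ContinuousMap.exists_restrict_eq hs
    ⟨s.restrict (fun z : ℝ × ℝ => f z.1 z.2), hf.restrict⟩
  refine ⟨fun x y => g (x, y), by exact g.continuous, fun x y hxy => ?_⟩
  have := congrFun (congrArg ContinuousMap.toFun hg) ⟨(x, y), hxy⟩
  exact this

theorem core (a b c d : ℝ) (hab : a < b) (hcd : c < d)
    (p q : ℝ) (hq : Real.HolderConjugate p q)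
    (f fx fy fxy : ℝ → ℝ → ℝ)
    (hfC : Continuous fun z : ℝ × ℝ => f z.1 z.2)
    (hfxC : Continuous fun z : ℝ × ℝ => fx z.1 z.2)
    (hfyC : Continuous fun z : ℝ × ℝ => fy z.1 z.2)
    (hfxyC : Continuous fun z : ℝ × ℝ => fxy z.1 z.2)
    (hfx : ∀ y ∈ Icc c d, ∀ x ∈ Ioo a b, HasDerivAt (fun x' => f x' y) (fx x y) x)
    (hfy : ∀ x ∈ Icc a b, ∀ y ∈ Ioo c d, HasDerivAt (fun y' => f x y') (fy x y) y)
    (hfxy : ∀ x ∈ Icc a b, ∀ y ∈ Ioo c d, HasDerivAt (fun y' => fx x y') (fxy x y) y)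
    (E : ℝ)
    (hE : (∫ x in a..b, ∫ y in c..d, f x y)
      = (f a c + f b d + f a d + f b c) * ((b - a) * (d - c) / 4) + E) :
    |E| ≤ ((∫ x in a..b, |fx x c| ^ p) ^ (1 / p) + (∫ x in a..b, |fx x d| ^ p) ^ (1 / p))
            * ((d - c) * (b - a) ^ (2 - 1 / p) / 4) * ((p - 1) / (2 * p - 1)) ^ (1 - 1 / p)
        + ((∫ y in c..d, |fy a y| ^ p) ^ (1 / p) + (∫ y in c..d, |fy b y| ^ p) ^ (1 / p))
            * ((b - a) * (d - c) ^ (2 - 1 / p) / 4) * ((p - 1) / (2 * p - 1)) ^ (1 - 1 / p)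
        + (∫ x in a..b, ∫ y in c..d, |fxy x y| ^ p) ^ (1 / p)
            * ((b - a) ^ (2 - 1 / p) * (d - c) ^ (2 - 1 / p) / 4)
            * ((p - 1) / (2 * p - 1)) ^ (2 * (1 - 1 / p)) := by
  have hp1 : 1 < p := hq.lt
  have hp0 : (0:ℝ) < p := hq.pos
  have hq0 : (0:ℝ) < q := hq.symm.pos
  set m : ℝ := (a + b) / 2 with hm
  set n : ℝ := (c + d) / 2 with hn
  set θ : ℝ := (p - 1) / (2 * p - 1) with hθdef
  have hθ : 0 < θ := div_pos (by linarith) (by linarith)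
  set Cab : ℝ := (b - a) ^ (2 - 1 / p) / 2 * θ ^ (1 - 1 / p) with hCab
  set Ccd : ℝ := (d - c) ^ (2 - 1 / p) / 2 * θ ^ (1 - 1 / p) with hCcd
  have hCab0 : 0 ≤ Cab := by
    rw [hCab]
    have := Real.rpow_nonneg (sub_pos.2 hab).le (2 - 1/p)
    have := Real.rpow_nonneg hθ.le (1 - 1/p)
    positivity
  have hCcd0 : 0 ≤ Ccd := by
    rw [hCcd]
    have := Real.rpow_nonneg (sub_pos.2 hcd).le (2 - 1/p)
    have := Real.rpow_nonneg hθ.le (1 - 1/p)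
    positivity
  have kab := kernel_int hab hq0
  have kcd := kernel_int hcd hq0
  have ceab := const_eq hab hq
  have cecd := const_eq hcd hq
  -- the two parametrized integrals
  set H0 : ℝ → ℝ := fun y => ∫ x in a..b, (x - m) * fx x y with hH0
  set H1 : ℝ → ℝ := fun y => ∫ x in a..b, (x - m) * fxy x y with hH1
  have hH0C : Continuous H0 := by
    apply intervalIntegral.continuous_parametric_intervalIntegral_of_continuous'
    exact (continuous_snd.sub continuous_const).mul
      (hfxC.comp (continuous_snd.prodMk continuous_fst))
  have hH1C : Continuous H1 := by
    apply intervalIntegral.continuous_parametric_intervalIntegral_of_continuous'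
    exact (continuous_snd.sub continuous_const).mul
      (hfxyC.comp (continuous_snd.prodMk continuous_fst))
  -- derivative of H0
  obtain ⟨C, hC⟩ := (isCompact_Icc.prod isCompact_Icc :
      IsCompact (Icc a b ×ˢ Icc c d)).exists_bound_of_continuousOn hfxyC.continuousOn
  have hder : ∀ y₀ ∈ Ioo c d, HasDerivAt H0 (H1 y₀) y₀ := by
    intro y₀ hy₀
    set ε : ℝ := min (y₀ - c) (d - y₀) with hε
    have hε0 : 0 < ε := lt_min (by linarith [hy₀.1]) (by linarith [hy₀.2])
    have hball : Metric.ball y₀ ε ⊆ Ioo c d := by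
      intro z hz
      rw [Metric.mem_ball, Real.dist_eq, abs_lt] at hz
      constructor
      · have := min_le_left (y₀ - c) (d - y₀); linarith [hz.1]
      · have := min_le_right (y₀ - c) (d - y₀); linarith [hz.2]
    have key := intervalIntegral.hasDerivAt_integral_of_dominated_loc_of_deriv_le
      (F := fun y t => (t - m) * fx t y) (F' := fun y t => (t - m) * fxy t y)
      (x₀ := y₀) (a := a) (b := b) (μ := volume)
      (bound := fun _ => (b - a) * |C|) (Metric.ball_mem_nhds y₀ hε0)
      (Filter.Eventually.of_forall fun y =>
        (((continuous_id.sub continuous_const).mul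
          (hfxC.comp (continuous_id.prodMk continuous_const))).aestronglyMeasurable))
      (((continuous_id.sub continuous_const).mul
          (hfxC.comp (continuous_id.prodMk continuous_const))).intervalIntegrable a b)
      (((continuous_id.sub continuous_const).mul
          (hfxyC.comp (continuous_id.prodMk continuous_const))).aestronglyMeasurable)
      ?_ (intervalIntegrable_const) ?_
    · exact key.2
    · apply Filter.Eventually.of_forall
      intro t ht y hy
      rw [uIoc_of_le hab.le] at ht
      have htab : t ∈ Icc a b := ⟨ht.1.le, ht.2⟩
      have hyIcc : y ∈ Icc c d := Ioo_subset_Icc_self (hball hy)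
      have h1 : |t - m| ≤ b - a := by
        rw [abs_le]; rw [hm] at *
        constructor <;> [linarith [htab.1, htab.2]; linarith [htab.1, htab.2]]
      have h2 : |fxy t y| ≤ |C| := by
        have := hC (t, y) ⟨htab, hyIcc⟩
        rw [Real.norm_eq_abs] at this
        exact this.trans (le_abs_self C)
      rw [Real.norm_eq_abs, abs_mul]
      exact mul_le_mul h1 h2 (abs_nonneg _) (by linarith)
    · apply Filter.Eventually.of_forall
      intro t ht y hy
      rw [uIoc_of_le hab.le] at ht
      exact (hfxy t ⟨ht.1.le, ht.2⟩ y (hball hy)).const_mul (t - m)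
  -- identity chain
  have contf : ∀ y : ℝ, Continuous fun x => f x y := fun y =>
    hfC.comp (continuous_id.prodMk continuous_const)
  have contf2 : ∀ x : ℝ, Continuous fun y => f x y := fun x =>
    hfC.comp (continuous_const.prodMk continuous_id)
  have contfx : ∀ y : ℝ, Continuous fun x => fx x y := fun y =>
    hfxC.comp (continuous_id.prodMk continuous_const)
  have contfy2 : ∀ x : ℝ, Continuous fun y => fy x y := fun x =>
    hfyC.comp (continuous_const.prodMk continuous_id)
  have contfxy : ∀ y : ℝ, Continuous fun x => fxy x y := fun y =>
    hfxyC.comp (continuous_id.prodMk continuous_const)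
  have trapx : ∀ y ∈ Icc c d, ∫ x in a..b, f x y
      = (f a y + f b y) * ((b - a) / 2) - H0 y := by
    intro y hy
    exact trap_id hab (contf y).continuousOn (fun x hx => hfx y hy x hx)
      ((contfx y).intervalIntegrable a b)
  have h2 : (∫ x in a..b, ∫ y in c..d, f x y)
      = ((∫ y in c..d, f a y) + ∫ y in c..d, f b y) * ((b - a) / 2)
        - ∫ y in c..d, H0 y := by
    rw [fub hab.le hcd.le hfC]
    have step1 : (∫ y in c..d, ∫ x in a..b, f x y)
        = ∫ y in c..d, ((f a y + f b y) * ((b - a) / 2) - H0 y) := by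
      apply integral_congr
      intro y hy
      rw [uIcc_of_le hcd.le] at hy
      exact trapx y hy
    rw [step1, integral_sub (by
        have h : Continuous fun y => (f a y + f b y) * ((b - a) / 2) :=
          ((contf2 a).add (contf2 b)).mul continuous_const
        exact h.intervalIntegrable c d) (hH0C.intervalIntegrable c d),
      intervalIntegral.integral_mul_const,
      integral_add ((contf2 a).intervalIntegrable c d) ((contf2 b).intervalIntegrable c d)]
  have h3 : (∫ y in c..d, f a y)
      = (f a c + f a d) * ((d - c) / 2) - ∫ y in c..d, (y - n) * fy a y :=
    trap_id hcd (contf2 a).continuousOn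
      (fun y hy => hfy a ⟨le_refl a, hab.le⟩ y hy)
      ((contfy2 a).intervalIntegrable c d)
  have h4 : (∫ y in c..d, f b y)
      = (f b c + f b d) * ((d - c) / 2) - ∫ y in c..d, (y - n) * fy b y :=
    trap_id hcd (contf2 b).continuousOn
      (fun y hy => hfy b ⟨hab.le, le_refl b⟩ y hy)
      ((contfy2 b).intervalIntegrable c d)
  have h5 : (∫ y in c..d, H0 y)
      = (H0 c + H0 d) * ((d - c) / 2) - ∫ y in c..d, (y - n) * H1 y :=
    trap_id hcd hH0C.continuousOn hder (hH1C.intervalIntegrable c d)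
  -- abbreviations
  set Aa : ℝ := ∫ y in c..d, (y - n) * fy a y with hAadef
  set Ab : ℝ := ∫ y in c..d, (y - n) * fy b y with hAbdef
  set T : ℝ := ∫ y in c..d, (y - n) * H1 y with hTdef
  have hEval : E = -((b - a) / 2 * (Aa + Ab)) + -((d - c) / 2 * (H0 c + H0 d)) + T := by
    linear_combination (-1 : ℝ) * hE + h2 + ((b - a) / 2) * h3 + ((b - a) / 2) * h4 - h5
  -- bounds
  set W : ℝ := ∫ x in a..b, ∫ y in c..d, |fxy x y| ^ p with hWdef
  have hBc : |H0 c| ≤ Cab * (∫ x in a..b, |fx x c| ^ p) ^ (1 / p) :=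
    kernel_holder hab hq kab ceab (contfx c).continuousOn
  have hBd : |H0 d| ≤ Cab * (∫ x in a..b, |fx x d| ^ p) ^ (1 / p) :=
    kernel_holder hab hq kab ceab (contfx d).continuousOn
  have hAa' : |Aa| ≤ Ccd * (∫ y in c..d, |fy a y| ^ p) ^ (1 / p) :=
    kernel_holder hcd hq kcd cecd (contfy2 a).continuousOn
  have hAb' : |Ab| ≤ Ccd * (∫ y in c..d, |fy b y| ^ p) ^ (1 / p) :=
    kernel_holder hcd hq kcd cecd (contfy2 b).continuousOn
  have hTb : |T| ≤ Ccd * (∫ y in c..d, |H1 y| ^ p) ^ (1 / p) :=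
    kernel_holder hcd hq kcd cecd hH1C.continuousOn
  have hJC : Continuous fun y => ∫ x in a..b, |fxy x y| ^ p := by
    apply intervalIntegral.continuous_parametric_intervalIntegral_of_continuous'
    exact ((hfxyC.comp (continuous_snd.prodMk continuous_fst)).abs).rpow_const
      (fun z => Or.inr hp0.le)
  have hJnn : ∀ y : ℝ, 0 ≤ ∫ x in a..b, |fxy x y| ^ p := fun y =>
    intervalIntegral.integral_nonneg hab.le (fun x _ => Real.rpow_nonneg (abs_nonneg _) p)
  have hH1p : ∀ y ∈ Icc c d, |H1 y| ^ p ≤ Cab ^ p * ∫ x in a..b, |fxy x y| ^ p := by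
    intro y _
    have h1 : |H1 y| ≤ Cab * (∫ x in a..b, |fxy x y| ^ p) ^ (1 / p) :=
      kernel_holder hab hq kab ceab (contfxy y).continuousOn
    calc |H1 y| ^ p ≤ (Cab * (∫ x in a..b, |fxy x y| ^ p) ^ (1 / p)) ^ p :=
          Real.rpow_le_rpow (abs_nonneg _) h1 hp0.le
      _ = Cab ^ p * ((∫ x in a..b, |fxy x y| ^ p) ^ (1 / p)) ^ p :=
          Real.mul_rpow hCab0 (Real.rpow_nonneg (hJnn y) _)
      _ = Cab ^ p * ∫ x in a..b, |fxy x y| ^ p := by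
          rw [← Real.rpow_mul (hJnn y), one_div_mul_cancel hp0.ne', Real.rpow_one]
  have hintW : (∫ y in c..d, |H1 y| ^ p) ≤ Cab ^ p * W := by
    have swap : W = ∫ y in c..d, ∫ x in a..b, |fxy x y| ^ p :=
      fub hab.le hcd.le ((hfxyC.abs).rpow_const fun z => Or.inr hp0.le)
    rw [swap, ← intervalIntegral.integral_const_mul]
    apply intervalIntegral.integral_mono_on hcd.le
    · exact ((hH1C.abs.rpow_const fun z => Or.inr hp0.le)).intervalIntegrable c d
    · exact ((continuous_const.mul hJC)).intervalIntegrable c d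
    · exact hH1p
  have hWnn : 0 ≤ W := intervalIntegral.integral_nonneg hab.le (fun x _ => intervalIntegral.integral_nonneg hcd.le (fun y _ => Real.rpow_nonneg (abs_nonneg _) p))
  have hH1nn : 0 ≤ ∫ y in c..d, |H1 y| ^ p :=
    intervalIntegral.integral_nonneg hcd.le (fun y _ => Real.rpow_nonneg (abs_nonneg _) p)
  have hfinal3 : (∫ y in c..d, |H1 y| ^ p) ^ (1 / p) ≤ Cab * W ^ (1 / p) := by
    calc (∫ y in c..d, |H1 y| ^ p) ^ (1 / p) ≤ (Cab ^ p * W) ^ (1 / p) :=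
          Real.rpow_le_rpow hH1nn hintW (by positivity)
      _ = (Cab ^ p) ^ (1 / p) * W ^ (1 / p) :=
          Real.mul_rpow (Real.rpow_nonneg hCab0 _) hWnn
      _ = Cab * W ^ (1 / p) := by
          rw [← Real.rpow_mul hCab0, mul_one_div_cancel hp0.ne', Real.rpow_one]
  have hT2 : |T| ≤ Ccd * (Cab * W ^ (1 / p)) :=
    hTb.trans (mul_le_mul_of_nonneg_left hfinal3 hCcd0)
  have habs : |E| ≤ (b - a) / 2 * (|Aa| + |Ab|) + (d - c) / 2 * (|H0 c| + |H0 d|) + |T| := by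
    rw [hEval]
    calc |(-((b - a) / 2 * (Aa + Ab)) + -((d - c) / 2 * (H0 c + H0 d)) + T)|
        ≤ |(-((b - a) / 2 * (Aa + Ab)))| + |(-((d - c) / 2 * (H0 c + H0 d)))| + |T| :=
          abs_add_three _ _ _
      _ ≤ (b - a) / 2 * (|Aa| + |Ab|) + (d - c) / 2 * (|H0 c| + |H0 d|) + |T| := by
          simp only [abs_neg, abs_mul]
          rw [abs_of_nonneg (by linarith : (0:ℝ) ≤ (b - a) / 2),
            abs_of_nonneg (by linarith : (0:ℝ) ≤ (d - c) / 2)]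
          have g1 : |Aa + Ab| ≤ |Aa| + |Ab| := abs_add_le _ _
          have g2 : |H0 c + H0 d| ≤ |H0 c| + |H0 d| := abs_add_le _ _
          have hba2 : (0:ℝ) ≤ (b - a) / 2 := by linarith
          have hdc2 : (0:ℝ) ≤ (d - c) / 2 := by linarith
          nlinarith [mul_le_mul_of_nonneg_left g1 hba2, mul_le_mul_of_nonneg_left g2 hdc2]
  have hθ2 : θ ^ (2 * (1 - 1 / p)) = θ ^ (1 - 1 / p) * θ ^ (1 - 1 / p) := by
    rw [show 2 * (1 - 1 / p) = (1 - 1 / p) + (1 - 1 / p) by ring, Real.rpow_add hθ]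
  calc |E| ≤ (b - a) / 2 * (|Aa| + |Ab|) + (d - c) / 2 * (|H0 c| + |H0 d|) + |T| := habs
    _ ≤ (b - a) / 2 * ((Ccd * (∫ y in c..d, |fy a y| ^ p) ^ (1 / p))
          + Ccd * (∫ y in c..d, |fy b y| ^ p) ^ (1 / p))
        + (d - c) / 2 * ((Cab * (∫ x in a..b, |fx x c| ^ p) ^ (1 / p))
          + Cab * (∫ x in a..b, |fx x d| ^ p) ^ (1 / p))
        + Ccd * (Cab * W ^ (1 / p)) := by
        refine add_le_add (add_le_add ?_ ?_) hT2
        · exact mul_le_mul_of_nonneg_left (add_le_add hAa' hAb') (by linarith)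
        · exact mul_le_mul_of_nonneg_left (add_le_add hBc hBd) (by linarith)
    _ = _ := by
        rw [hθ2, hCab, hCcd]
        ring


/-- Trapezoidal rule L^p error bound, 1 < p < ∞. -/
theorem stmt_3 (a b c d : ℝ) (hab : a < b) (hcd : c < d)
    (p q : ℝ) (hp : 1 < p) (hpq : 1 / p + 1 / q = 1)
    (f fx fy fxy : ℝ → ℝ → ℝ)
(hfC : ContinuousOn (fun p : ℝ × ℝ => f p.1 p.2) (Icc a b ×ˢ Icc c d))
    (hfx : ∀ x ∈ Icc a b, ∀ y ∈ Icc c d, HasDerivAt (fun x' => f x' y) (fx x y) x)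
    (hfy : ∀ x ∈ Icc a b, ∀ y ∈ Icc c d, HasDerivAt (fun y' => f x y') (fy x y) y)
    (hfxy : ∀ x ∈ Icc a b, ∀ y ∈ Icc c d, HasDerivAt (fun y' => fx x y') (fxy x y) y)
    (hfxC : ContinuousOn (fun p : ℝ × ℝ => fx p.1 p.2) (Icc a b ×ˢ Icc c d))
    (hfyC : ContinuousOn (fun p : ℝ × ℝ => fy p.1 p.2) (Icc a b ×ˢ Icc c d))
    (hfxyC : ContinuousOn (fun p : ℝ × ℝ => fxy p.1 p.2) (Icc a b ×ˢ Icc c d))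
    (E : ℝ)
    (hE : (∫ x in a..b, ∫ y in c..d, f x y) = (f a c + f b d + f a d + f b c) * ((b - a) * (d - c) / 4) + E) :
    |E| ≤ ((∫ x in a..b, |fx x c| ^ p) ^ (1 / p) + (∫ x in a..b, |fx x d| ^ p) ^ (1 / p))
            * ((d - c) * (b - a) ^ (2 - 1 / p) / 4) * ((p - 1) / (2 * p - 1)) ^ (1 - 1 / p)
        + ((∫ y in c..d, |fy a y| ^ p) ^ (1 / p) + (∫ y in c..d, |fy b y| ^ p) ^ (1 / p))
            * ((b - a) * (d - c) ^ (2 - 1 / p) / 4) * ((p - 1) / (2 * p - 1)) ^ (1 - 1 / p)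
        + (∫ x in a..b, ∫ y in c..d, |fxy x y| ^ p) ^ (1 / p)
            * ((b - a) ^ (2 - 1 / p) * (d - c) ^ (2 - 1 / p) / 4)
            * ((p - 1) / (2 * p - 1)) ^ (2 * (1 - 1 / p)) := by
  have hq : Real.HolderConjugate p q := Real.holderConjugate_iff.mpr ⟨hp, by simpa [one_div] using hpq⟩
  have hsc : IsClosed (Icc a b ×ˢ Icc c d : Set (ℝ × ℝ)) := isClosed_Icc.prod isClosed_Icc
  obtain ⟨g, hgC, hg⟩ := ext_cont hsc hfC
  obtain ⟨gx, hgxC, hgxe⟩ := ext_cont hsc hfxC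
  obtain ⟨gy, hgyC, hgye⟩ := ext_cont hsc hfyC
  obtain ⟨gxy, hgxyC, hgxye⟩ := ext_cont hsc hfxyC
  have hmem : ∀ {x y : ℝ}, x ∈ Icc a b → y ∈ Icc c d →
      (x, y) ∈ (Icc a b ×ˢ Icc c d : Set (ℝ × ℝ)) := fun hx hy => ⟨hx, hy⟩
  have haI : a ∈ Icc a b := ⟨le_refl a, hab.le⟩
  have hbI : b ∈ Icc a b := ⟨hab.le, le_refl b⟩
  have hcI : c ∈ Icc c d := ⟨le_refl c, hcd.le⟩
  have hdI : d ∈ Icc c d := ⟨hcd.le, le_refl d⟩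
  -- transferred derivative hypotheses
  have hgx' : ∀ y ∈ Icc c d, ∀ x ∈ Ioo a b, HasDerivAt (fun x' => g x' y) (gx x y) x := by
    intro y hy x hx
    have h1 : HasDerivAt (fun x' => f x' y) (fx x y) x := hfx x (Ioo_subset_Icc_self hx) y hy
    have h2 : (fun x' => g x' y) =ᶠ[nhds x] fun x' => f x' y := by
      filter_upwards [Ioo_mem_nhds hx.1 hx.2] with t ht
      exact hg t y (hmem (Ioo_subset_Icc_self ht) hy)
    rw [hgxe x y (hmem (Ioo_subset_Icc_self hx) hy)]
    exact h2.hasDerivAt_iff.mpr h1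
  have hgy' : ∀ x ∈ Icc a b, ∀ y ∈ Ioo c d, HasDerivAt (fun y' => g x y') (gy x y) y := by
    intro x hx y hy
    have h1 : HasDerivAt (fun y' => f x y') (fy x y) y := hfy x hx y (Ioo_subset_Icc_self hy)
    have h2 : (fun y' => g x y') =ᶠ[nhds y] fun y' => f x y' := by
      filter_upwards [Ioo_mem_nhds hy.1 hy.2] with t ht
      exact hg x t (hmem hx (Ioo_subset_Icc_self ht))
    rw [hgye x y (hmem hx (Ioo_subset_Icc_self hy))]
    exact h2.hasDerivAt_iff.mpr h1
  have hgxy' : ∀ x ∈ Icc a b, ∀ y ∈ Ioo c d, HasDerivAt (fun y' => gx x y') (gxy x y) y := by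
    intro x hx y hy
    have h1 : HasDerivAt (fun y' => fx x y') (fxy x y) y := hfxy x hx y (Ioo_subset_Icc_self hy)
    have h2 : (fun y' => gx x y') =ᶠ[nhds y] fun y' => fx x y' := by
      filter_upwards [Ioo_mem_nhds hy.1 hy.2] with t ht
      exact hgxe x t (hmem hx (Ioo_subset_Icc_self ht))
    rw [hgxye x y (hmem hx (Ioo_subset_Icc_self hy))]
    exact h2.hasDerivAt_iff.mpr h1
  -- transferred integral identity
  have hIE : (∫ x in a..b, ∫ y in c..d, g x y) = ∫ x in a..b, ∫ y in c..d, f x y := by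
    apply intervalIntegral.integral_congr
    intro x hx
    rw [uIcc_of_le hab.le] at hx
    show (∫ y in c..d, g x y) = ∫ y in c..d, f x y
    apply intervalIntegral.integral_congr
    intro y hy
    rw [uIcc_of_le hcd.le] at hy
    exact hg x y (hmem hx hy)
  have hE' : (∫ x in a..b, ∫ y in c..d, g x y)
      = (g a c + g b d + g a d + g b c) * ((b - a) * (d - c) / 4) + E := by
    rw [hIE, hg a c (hmem haI hcI), hg b d (hmem hbI hdI), hg a d (hmem haI hdI),
      hg b c (hmem hbI hcI)]
    exact hE
  have main := core a b c d hab hcd p q hq g gx gy gxy hgC hgxC hgyC hgxyC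
    hgx' hgy' hgxy' E hE'
  -- rewrite conclusion back to the original functions
  have e1 : (∫ x in a..b, |gx x c| ^ p) = ∫ x in a..b, |fx x c| ^ p := by
    apply intervalIntegral.integral_congr
    intro x hx; rw [uIcc_of_le hab.le] at hx
    show |gx x c| ^ p = |fx x c| ^ p
    rw [hgxe x c (hmem hx hcI)]
  have e2 : (∫ x in a..b, |gx x d| ^ p) = ∫ x in a..b, |fx x d| ^ p := by
    apply intervalIntegral.integral_congr
    intro x hx; rw [uIcc_of_le hab.le] at hx
    show |gx x d| ^ p = |fx x d| ^ p
    rw [hgxe x d (hmem hx hdI)]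
  have e3 : (∫ y in c..d, |gy a y| ^ p) = ∫ y in c..d, |fy a y| ^ p := by
    apply intervalIntegral.integral_congr
    intro y hy; rw [uIcc_of_le hcd.le] at hy
    show |gy a y| ^ p = |fy a y| ^ p
    rw [hgye a y (hmem haI hy)]
  have e4 : (∫ y in c..d, |gy b y| ^ p) = ∫ y in c..d, |fy b y| ^ p := by
    apply intervalIntegral.integral_congr
    intro y hy; rw [uIcc_of_le hcd.le] at hy
    show |gy b y| ^ p = |fy b y| ^ p
    rw [hgye b y (hmem hbI hy)]
  have e5 : (∫ x in a..b, ∫ y in c..d, |gxy x y| ^ p)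
      = ∫ x in a..b, ∫ y in c..d, |fxy x y| ^ p := by
    apply intervalIntegral.integral_congr
    intro x hx; rw [uIcc_of_le hab.le] at hx
    show (∫ y in c..d, |gxy x y| ^ p) = ∫ y in c..d, |fxy x y| ^ p
    apply intervalIntegral.integral_congr
    intro y hy; rw [uIcc_of_le hcd.le] at hy
    show |gxy x y| ^ p = |fxy x y| ^ p
    rw [hgxye x y (hmem hx hy)]
  rw [e1, e2, e3, e4, e5] at main
  exact main
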